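/- Let 𝒰 be an upward-closed subset of (ℤ[1/p]_{≥0})^r (with componentwise order) with lower region 𝒧 its complement, and suppose 𝒰 satisfies: a/q ∈ 𝒰 with (a − e_s)/q ∈ 𝒧 implies (a − e_s/p)/q ∈ 𝒧 for each s with a_s > 0. Then for a/q ∈ 𝒰: (a − e_s)/q ∈ 𝒧 for all s with a_s > 0 if and only if a'/q' ∈ 𝒧 for all a'/q' strictly less than a/q (i.e., ≤ componentwise and not equal). -/

import Mathlib

/-- Abstract critical-point lemma.  Points of `(ℤ[1/p]_{≥0})^r` are
modelled as tuples of rationals of the form `a i / p^e`.  Let `𝒰` be an upward-closed set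
of such points (with complement `𝒧`) satisfying the "no gaps" property: if `a/q ∈ 𝒰` and
`(a − e_s)/q ∈ 𝒧` (for `s` with `a_s > 0`), then `(a − e_s/p)/q ∈ 𝒧`.  Then for
`a/q ∈ 𝒰`: `(a − e_s)/q ∈ 𝒧` for all `s` with `a_s > 0` iff every point strictly below
`a/q` lies in `𝒧`. -/
theorem stmt_13 (p r : ℕ) (hp : p.Prime) (hr : 0 < r)
    (U : Set (Fin r → ℚ))
    (hdom : ∀ x ∈ U, ∃ (a : Fin r → ℕ) (e : ℕ), ∀ i, x i = (a i : ℚ) / (p : ℚ) ^ e)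
    (hup : ∀ x ∈ U, ∀ y : Fin r → ℚ,
      (∃ (a : Fin r → ℕ) (e : ℕ), ∀ i, y i = (a i : ℚ) / (p : ℚ) ^ e) → x ≤ y → y ∈ U)
    (hgap : ∀ (a : Fin r → ℕ) (e : ℕ) (s : Fin r), 0 < a s →
      (fun i => (a i : ℚ) / (p : ℚ) ^ e) ∈ U →
      (fun i => ((a i : ℚ) - if i = s then 1 else 0) / (p : ℚ) ^ e) ∉ U →
      (fun i => (a i : ℚ) / (p : ℚ) ^ e - if i = s then 1 / (p : ℚ) ^ (e + 1) else 0) ∉ U)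
    (a : Fin r → ℕ) (e : ℕ)
    (hU : (fun i => (a i : ℚ) / (p : ℚ) ^ e) ∈ U) :
    (∀ s : Fin r, 0 < a s →
        (fun i => ((a i : ℚ) - if i = s then 1 else 0) / (p : ℚ) ^ e) ∉ U) ↔
      (∀ y : Fin r → ℚ,
        (∃ (b : Fin r → ℕ) (e' : ℕ), ∀ i, y i = (b i : ℚ) / (p : ℚ) ^ e') →
        y ≤ (fun i => (a i : ℚ) / (p : ℚ) ^ e) →
        y ≠ (fun i => (a i : ℚ) / (p : ℚ) ^ e) → y ∉ U) := by
  have hp0 : (0:ℚ) < (p:ℚ) := by exact_mod_cast hp.pos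
  have hpe : ∀ n : ℕ, (0:ℚ) < (p:ℚ) ^ n := fun n => pow_pos hp0 n
  constructor
  · intro h
    -- key induction: a/q − e_s/p^(e+k) ∉ U for all k
    have key : ∀ s : Fin r, 0 < a s → ∀ k : ℕ,
        (fun i => (a i : ℚ) / (p:ℚ) ^ e - if i = s then 1 / (p:ℚ) ^ (e + k) else 0) ∉ U := by
      intro s hs k
      induction k with
      | zero =>
        have heq : (fun i => (a i : ℚ) / (p:ℚ) ^ e - if i = s then 1 / (p:ℚ) ^ (e + 0) else 0)
            = (fun i => ((a i : ℚ) - if i = s then 1 else 0) / (p:ℚ) ^ e) := by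
          funext i
          by_cases hi : i = s <;> simp [hi, sub_div]
        rw [heq]
        exact h s hs
      | succ k ih =>
        have h1 : (fun i => ((p ^ k * a i : ℕ) : ℚ) / (p:ℚ) ^ (e + k))
            = (fun i => (a i : ℚ) / (p:ℚ) ^ e) := by
          funext i
          push_cast
          rw [pow_add]
          field_simp
        have h2 : (fun i => (((p ^ k * a i : ℕ) : ℚ) - if i = s then 1 else 0) / (p:ℚ) ^ (e + k))
            = (fun i => (a i : ℚ) / (p:ℚ) ^ e - if i = s then 1 / (p:ℚ) ^ (e + k) else 0) := by
          funext i
          by_cases hi : i = s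
          · simp only [hi, if_pos rfl, eq_self_iff_true, if_true]
            push_cast
            rw [pow_add, sub_div]
            congr 1
            field_simp
          · simp only [hi, if_neg hi, ite_false, sub_zero]
            push_cast
            rw [pow_add]
            field_simp
        have h3 := hgap (fun i => p ^ k * a i) (e + k) s
          (Nat.mul_pos (Nat.pow_pos hp.pos) hs)
          (by rw [h1]; exact hU) (by rw [h2]; exact ih)
        have h4 : (fun i => ((p ^ k * a i : ℕ) : ℚ) / (p:ℚ) ^ (e + k)
              - if i = s then 1 / (p:ℚ) ^ (e + k + 1) else 0)
            = (fun i => (a i : ℚ) / (p:ℚ) ^ e - if i = s then 1 / (p:ℚ) ^ (e + (k + 1)) else 0) := by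
          funext i
          have hcast : ((p ^ k * a i : ℕ) : ℚ) / (p:ℚ) ^ (e + k) = (a i : ℚ) / (p:ℚ) ^ e := by
            push_cast; rw [pow_add]; field_simp
          rw [hcast, show e + k + 1 = e + (k + 1) from by ring]
        rw [h4] at h3
        exact h3
    rintro y ⟨b, e', hy⟩ hle hne hyU
    -- find a coordinate where y is strictly below
    have hex : ∃ s, y s < (a s : ℚ) / (p:ℚ) ^ e := by
      by_contra hc
      push_neg at hc
      exact hne (funext fun i => le_antisymm (hle i) (hc i))
    obtain ⟨s, hslt⟩ := hex
    have hys0 : 0 ≤ y s := by rw [hy s]; positivity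
    have has : 0 < a s := by
      rcases Nat.eq_zero_or_pos (a s) with hc | hc
      · rw [hc] at hslt
        simp at hslt
        exact absurd hslt (not_lt.2 hys0)
      · exact hc
    -- z: replace only coordinate s of a/q by y s
    set z : Fin r → ℚ := fun i => if i = s then y s else (a i : ℚ) / (p:ℚ) ^ e with hz
    have hzrep : ∃ (c : Fin r → ℕ) (e'' : ℕ), ∀ i, z i = (c i : ℚ) / (p:ℚ) ^ e'' := by
      refine ⟨fun i => if i = s then b s * p ^ e else a i * p ^ e', e + e', fun i => ?_⟩
      by_cases hi : i = s
      · simp only [hz, hi, if_pos rfl, eq_self_iff_true, if_true]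
        rw [hy s]
        push_cast
        rw [pow_add]
        field_simp
      · simp only [hz, if_neg hi]
        push_cast
        rw [pow_add]
        field_simp
    have hzU : z ∈ U := by
      refine hup y hyU z hzrep fun i => ?_
      by_cases hi : i = s
      · simp [hz, hi]
      · simp only [hz, if_neg hi]
        exact hle i
    -- z ≤ w where w = a/q − e_s/p^(e+e')
    have hbs : (b s : ℚ) * (p:ℚ) ^ e + 1 ≤ (a s : ℚ) * (p:ℚ) ^ e' := by
      have h1 : (b s : ℚ) / (p:ℚ) ^ e' < (a s : ℚ) / (p:ℚ) ^ e := by rw [← hy s]; exact hslt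
      have h2 : (b s : ℚ) * (p:ℚ) ^ e < (a s : ℚ) * (p:ℚ) ^ e' := by
        rw [div_lt_div_iff₀ (hpe e') (hpe e)] at h1
        exact h1
      have h3 : (b s * p ^ e : ℕ) < (a s * p ^ e' : ℕ) := by exact_mod_cast h2
      have h4 : (b s * p ^ e : ℕ) + 1 ≤ (a s * p ^ e' : ℕ) := h3
      exact_mod_cast h4
    have hrhs : (a s : ℚ) / (p:ℚ) ^ e - 1 / (p:ℚ) ^ (e + e')
        = ((a s : ℚ) * (p:ℚ) ^ e' - 1) / (p:ℚ) ^ (e + e') := by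
      rw [pow_add]
      field_simp
    have hzw : z ≤ fun i => (a i : ℚ) / (p:ℚ) ^ e - if i = s then 1 / (p:ℚ) ^ (e + e') else 0 := by
      intro i
      by_cases hi : i = s
      · simp only [hz, hi, if_pos rfl, eq_self_iff_true, if_true]
        rw [hy s, hrhs, div_le_div_iff₀ (hpe e') (hpe (e + e')), pow_add]
        nlinarith [hbs, (hpe e').le, (hpe e).le]
      · simp [hz, if_neg hi, hi]
    have hwrep : ∃ (c : Fin r → ℕ) (e'' : ℕ), ∀ i,
        ((a i : ℚ) / (p:ℚ) ^ e - if i = s then 1 / (p:ℚ) ^ (e + e') else 0)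
          = (c i : ℚ) / (p:ℚ) ^ e'' := by
      refine ⟨fun i => if i = s then a s * p ^ e' - 1 else a i * p ^ e', e + e', fun i => ?_⟩
      by_cases hi : i = s
      · simp only [hi, if_pos rfl, eq_self_iff_true, if_true]
        have h1 : 1 ≤ a s * p ^ e' :=
          Nat.one_le_iff_ne_zero.2 (Nat.mul_ne_zero has.ne' (pow_ne_zero _ hp.pos.ne'))
        rw [hrhs, Nat.cast_sub h1]
        push_cast
        ring_nf
      · simp only [if_neg hi, sub_zero]
        push_cast
        rw [pow_add]
        field_simp
    exact key s has e' (hup z hzU _ hwrep hzw)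
  · intro h s hs
    have hrep : ∃ (b : Fin r → ℕ) (e' : ℕ), ∀ i,
        ((a i : ℚ) - if i = s then 1 else 0) / (p:ℚ) ^ e = (b i : ℚ) / (p:ℚ) ^ e' := by
      refine ⟨fun i => a i - if i = s then 1 else 0, e, fun i => ?_⟩
      by_cases hi : i = s
      · simp only [hi, if_pos rfl, eq_self_iff_true, if_true]
        rw [Nat.cast_sub hs]
        simp
      · simp [hi]
    refine h _ hrep (fun i => ?_) ?_
    · by_cases hi : i = s
      · simp only [hi, if_pos rfl, eq_self_iff_true, if_true]
        gcongr
        linarith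
      · simp [hi]
    · intro hc
      have h2 := congrFun hc s
      simp only [if_pos rfl, eq_self_iff_true, if_true] at h2
      rw [sub_div] at h2
      have h3 : (1:ℚ) / (p:ℚ) ^ e = 0 := by linarith
      have h4 : (0:ℚ) < 1 / (p:ℚ) ^ e := by positivity
      rw [h3] at h4
      exact lt_irrefl 0 h4
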